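/- Let (𝔡, ⟨·,·⟩) be a quadratic Lie algebra with Cartan 3-form χ(x,y,z) = ⟨[x,y],z⟩, and let k: 𝔡 × 𝔡 × 𝔡 → ℝ be trilinear with (i) k(x,y,z) = −k(x,z,y), (ii) k(x,y,z) + k(y,z,x) + k(z,x,y) = −χ(x,y,z), and (iii) ∑_μ k(t_μ, z, t^μ) = 0 for all z ∈ 𝔡 (divergence-free). For f ∈ 𝔡*, let ♯f ∈ 𝔡 denote the unique element with ⟨♯f, v⟩ = f(v) for all v. Define Ric(x,y) := ½ ∑_μ [ k(♯(k(·, t_μ, y)), x, t^μ) − k(y, ♯(k(t_μ, x, ·)), t^μ) − k(t^μ, ♯(k(x, t_μ, ·)), y) + k([t_μ, x], y, t^μ) + k([t_μ, y], x, t^μ) ]. Then Ric(x,y) = ½ ∑_{λ,μ} k(t_λ, t_μ, y) · ( k(t^λ, t^μ, x) − 2 k(t^μ, t^λ, x) ) for all x, y ∈ 𝔡. -/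

import Mathlib

set_option maxHeartbeats 2000000 in
/-- **The generalized Ricci tensor of a divergence-free torsion-free metric
connection over a point.**
With `k` trilinear, antisymmetric in the last two slots, satisfying the
torsion-free identity with the Cartan 3-form and divergence-free, and with `♯`
the musical isomorphism of `B`, the generalized Ricci tensor
`Ric(x,y) = ½ ∑_μ [ k(♯k(·,t_μ,y), x, t^μ) − k(y, ♯k(t_μ,x,·), t^μ)
 − k(t^μ, ♯k(x,t_μ,·), y) + k([t_μ,x],y,t^μ) + k([t_μ,y],x,t^μ) ]`
equals `½ ∑_{λμ} k(t_λ,t_μ,y) (k(t^λ,t^μ,x) − 2 k(t^μ,t^λ,x))`. -/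
theorem stmt11 (D : Type*) [LieRing D] [LieAlgebra ℝ D] [FiniteDimensional ℝ D]
    (B : LinearMap.BilinForm ℝ D) (hnd : B.Nondegenerate) (hsymm : B.IsSymm)
    (hinvar : ∀ x y z : D, B ⁅x, y⁆ z = B x ⁅y, z⁆)
    (sharp : Module.Dual ℝ D →ₗ[ℝ] D)
    (hsharp : ∀ (f : Module.Dual ℝ D) (v : D), B (sharp f) v = f v)
    (k : D →ₗ[ℝ] D →ₗ[ℝ] D →ₗ[ℝ] ℝ)
    (hskew : ∀ x y z : D, k x y z = - k x z y)
    (htor : ∀ x y z : D, k x y z + k y z x + k z x y = - B ⁅x, y⁆ z)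
    (ι : Type*) [Fintype ι] [DecidableEq ι] (b : Module.Basis ι ℝ D) (c : ι → D)
    (hdual : ∀ μ ν : ι, B (c μ) (b ν) = if μ = ν then 1 else 0)
    (hdivfree : ∀ z : D, ∑ m : ι, k (b m) z (c m) = 0) :
    ∀ x y : D,
      (1 / 2 : ℝ) * ∑ m : ι,
        (k (sharp ((k.flip (b m)).flip y)) x (c m)
          - k y (sharp (k (b m) x)) (c m)
          - k (c m) (sharp (k x (b m))) y
          + k ⁅b m, x⁆ y (c m)
          + k ⁅b m, y⁆ x (c m)) =
      (1 / 2 : ℝ) * ∑ l : ι, ∑ m : ι,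
        k (b l) (b m) y * (k (c l) (c m) x - 2 * k (c m) (c l) x) := by
  intro x y
  -- expansion of any vector in terms of the dual bases
  have expand : ∀ w : D, w = ∑ l : ι, B w (b l) • c l := by
    intro w
    have hb : ∀ n : ι, B w (b n) = B (∑ l : ι, B w (b l) • c l) (b n) := by
      intro n
      rw [map_sum]
      simp [LinearMap.sum_apply, hdual]
    have heq : B w = B (∑ l : ι, B w (b l) • c l) := b.ext hb
    have h1 : ∀ v, B (w - ∑ l : ι, B w (b l) • c l) v = 0 := by
      intro v
      rw [map_sub, LinearMap.sub_apply, ← heq, sub_self]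
    exact sub_eq_zero.mp (hnd.1 _ h1)
  have sharp_eq : ∀ f : Module.Dual ℝ D, sharp f = ∑ l : ι, f (b l) • c l := by
    intro f
    conv_lhs => rw [expand (sharp f)]
    exact Finset.sum_congr rfl fun l _ => by rw [hsharp]
  have key : ∀ (G : D →ₗ[ℝ] ℝ) (u : D), G u = ∑ l : ι, B u (b l) * G (c l) := by
    intro G u
    conv_lhs => rw [expand u]
    rw [map_sum]
    exact Finset.sum_congr rfl fun l _ => by rw [map_smul, smul_eq_mul]
  have flipc : ∀ F : D →ₗ[ℝ] D →ₗ[ℝ] ℝ,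
      ∑ m : ι, F (b m) (c m) = ∑ m : ι, F (c m) (b m) := by
    intro F
    have l1 : ∀ m, F (b m) (c m) = ∑ l : ι, B (b m) (b l) * F (c l) (c m) := by
      intro m; simpa using key (F.flip (c m)) (b m)
    have l2 : ∀ m, F (c m) (b m) = ∑ l : ι, B (b m) (b l) * F (c m) (c l) := by
      intro m; simpa using key (F (c m)) (b m)
    calc ∑ m : ι, F (b m) (c m) = ∑ m : ι, ∑ l : ι, B (b m) (b l) * F (c l) (c m) :=
          Finset.sum_congr rfl fun m _ => l1 m
      _ = ∑ l : ι, ∑ m : ι, B (b m) (b l) * F (c l) (c m) := Finset.sum_comm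
      _ = ∑ m : ι, ∑ l : ι, B (b m) (b l) * F (c m) (c l) := by
          refine Finset.sum_congr rfl fun m _ => Finset.sum_congr rfl fun l _ => ?_
          rw [show B (b l) (b m) = B (b m) (b l) from by rw [hsymm.eq]]
      _ = ∑ m : ι, F (c m) (b m) := Finset.sum_congr rfl fun m _ => (l2 m).symm
  have flip_mul : ∀ f g : D →ₗ[ℝ] ℝ,
      ∑ m : ι, f (b m) * g (c m) = ∑ m : ι, f (c m) * g (b m) := by
    intro f g
    simpa using flipc ((LinearMap.mul ℝ ℝ).compl₁₂ f g)
  have f33 : ∀ u v w z : D,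
      ∑ m : ι, k u v (b m) * k w z (c m) = ∑ m : ι, k u v (c m) * k w z (b m) :=
    fun u v w z => by simpa using flip_mul (k u v) (k w z)
  have f32 : ∀ u v w z : D,
      ∑ m : ι, k u v (b m) * k w (c m) z = ∑ m : ι, k u v (c m) * k w (b m) z :=
    fun u v w z => by simpa using flip_mul (k u v) ((k w).flip z)
  have f31 : ∀ u v w z : D,
      ∑ m : ι, k u v (b m) * k (c m) w z = ∑ m : ι, k u v (c m) * k (b m) w z :=
    fun u v w z => by simpa using flip_mul (k u v) ((k.flip w).flip z)
  have f13 : ∀ u v w z : D,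
      ∑ m : ι, k (b m) u v * k w z (c m) = ∑ m : ι, k (c m) u v * k w z (b m) :=
    fun u v w z => by simpa using flip_mul ((k.flip u).flip v) (k w z)
  have f21 : ∀ u v w z : D,
      ∑ m : ι, k u (b m) v * k (c m) w z = ∑ m : ι, k u (c m) v * k (b m) w z :=
    fun u v w z => by simpa using flip_mul ((k u).flip v) ((k.flip w).flip z)
  have f11 : ∀ u v w z : D,
      ∑ m : ι, k (b m) u v * k (c m) w z = ∑ m : ι, k (c m) u v * k (b m) w z :=
    fun u v w z => by simpa using flip_mul ((k.flip u).flip v) ((k.flip w).flip z)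
  have f23 : ∀ u v w z : D,
      ∑ m : ι, k u (b m) v * k w z (c m) = ∑ m : ι, k u (c m) v * k w z (b m) :=
    fun u v w z => by simpa using flip_mul ((k u).flip v) (k w z)
  -- expansion of the five terms
  have he1 : ∀ m : ι, k (sharp ((k.flip (b m)).flip y)) x (c m)
      = ∑ l : ι, k (b l) (b m) y * k (c l) x (c m) := by
    intro m
    rw [sharp_eq, map_sum]
    simp [LinearMap.sum_apply]
  have he2 : ∀ m : ι, k y (sharp (k (b m) x)) (c m)
      = ∑ l : ι, k (b m) x (b l) * k y (c l) (c m) := by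
    intro m
    rw [sharp_eq, map_sum]
    simp [LinearMap.sum_apply]
  have he3 : ∀ m : ι, k (c m) (sharp (k x (b m))) y
      = ∑ l : ι, k x (b m) (b l) * k (c m) (c l) y := by
    intro m
    rw [sharp_eq, map_sum]
    simp [LinearMap.sum_apply]
  have he4 : ∀ u v w z : D, k ⁅u, v⁆ w z
      = ∑ l : ι, (-(k u v (b l) + k v (b l) u + k (b l) u v)) * k (c l) w z := by
    intro u v w z
    conv_lhs => rw [expand ⁅u, v⁆]
    simp only [map_sum, LinearMap.sum_apply, map_smul, LinearMap.smul_apply, smul_eq_mul]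
    refine Finset.sum_congr rfl fun l _ => ?_
    have h := htor u v (b l)
    rw [show B ⁅u, v⁆ (b l) = -(k u v (b l) + k v (b l) u + k (b l) u v) from by linarith]
  -- the nine double-sum evaluations
  have hT1 : ∑ m : ι, ∑ l : ι, k (b l) (b m) y * k (c l) x (c m)
      = -∑ m : ι, ∑ l : ι, k (b l) (b m) y * k (c l) (c m) x := by
    calc ∑ m : ι, ∑ l : ι, k (b l) (b m) y * k (c l) x (c m)
        = ∑ m : ι, ∑ l : ι, -(k (b l) (b m) y * k (c l) (c m) x) := by
          refine Finset.sum_congr rfl fun m _ => Finset.sum_congr rfl fun l _ => ?_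
          rw [hskew (c l) x (c m)]; ring
      _ = -∑ m : ι, ∑ l : ι, k (b l) (b m) y * k (c l) (c m) x := by
          simp only [Finset.sum_neg_distrib]
  have hT2 : ∑ m : ι, ∑ l : ι, k (b m) x (b l) * k y (c l) (c m)
      = ∑ m : ι, ∑ l : ι, k y (b l) (b m) * k (c l) (c m) x := by
    calc ∑ m : ι, ∑ l : ι, k (b m) x (b l) * k y (c l) (c m)
        = ∑ m : ι, ∑ l : ι, k (b m) x (c l) * k y (b l) (c m) :=
          Finset.sum_congr rfl fun m _ => f32 (b m) x y (c m)
      _ = ∑ l : ι, ∑ m : ι, k (b m) x (c l) * k y (b l) (c m) := Finset.sum_comm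
      _ = ∑ l : ι, ∑ m : ι, k (c m) x (c l) * k y (b l) (b m) :=
          Finset.sum_congr rfl fun l _ => f13 x (c l) y (b l)
      _ = ∑ l : ι, ∑ m : ι, k y (b m) (b l) * k (c m) (c l) x := by
          refine Finset.sum_congr rfl fun l _ => Finset.sum_congr rfl fun m _ => ?_
          rw [hskew (c m) x (c l), hskew y (b l) (b m)]; ring
  have hT3 : ∑ m : ι, ∑ l : ι, k x (b m) (b l) * k (c m) (c l) y
      = ∑ m : ι, ∑ l : ι, k (b l) (b m) y * k x (c l) (c m) := by
    calc ∑ m : ι, ∑ l : ι, k x (b m) (b l) * k (c m) (c l) y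
        = ∑ m : ι, ∑ l : ι, k x (b m) (c l) * k (c m) (b l) y :=
          Finset.sum_congr rfl fun m _ => f32 x (b m) (c m) y
      _ = ∑ l : ι, ∑ m : ι, k x (b m) (c l) * k (c m) (b l) y := Finset.sum_comm
      _ = ∑ l : ι, ∑ m : ι, k x (c m) (c l) * k (b m) (b l) y :=
          Finset.sum_congr rfl fun l _ => f21 x (c l) (b l) y
      _ = ∑ l : ι, ∑ m : ι, k (b m) (b l) y * k x (c m) (c l) := by
          refine Finset.sum_congr rfl fun l _ => Finset.sum_congr rfl fun m _ => ?_
          ring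
  have hP1 : ∑ m : ι, ∑ l : ι, k (b m) x (b l) * k (c l) y (c m)
      = ∑ m : ι, ∑ l : ι, k (b l) (b m) y * k (c m) (c l) x := by
    calc ∑ m : ι, ∑ l : ι, k (b m) x (b l) * k (c l) y (c m)
        = ∑ m : ι, ∑ l : ι, k (b m) x (c l) * k (b l) y (c m) :=
          Finset.sum_congr rfl fun m _ => f31 (b m) x y (c m)
      _ = ∑ l : ι, ∑ m : ι, k (b m) x (c l) * k (b l) y (c m) := Finset.sum_comm
      _ = ∑ l : ι, ∑ m : ι, k (c m) x (c l) * k (b l) y (b m) :=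
          Finset.sum_congr rfl fun l _ => f13 x (c l) (b l) y
      _ = ∑ m : ι, ∑ l : ι, k (c m) x (c l) * k (b l) y (b m) := Finset.sum_comm
      _ = ∑ m : ι, ∑ l : ι, k (b l) (b m) y * k (c m) (c l) x := by
          refine Finset.sum_congr rfl fun m _ => Finset.sum_congr rfl fun l _ => ?_
          rw [hskew (c m) x (c l), hskew (b l) y (b m)]; ring
  have hP2 : ∑ m : ι, ∑ l : ι, k x (b l) (b m) * k (c l) y (c m)
      = -∑ m : ι, ∑ l : ι, k (b l) (b m) y * k x (c l) (c m) := by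
    calc ∑ m : ι, ∑ l : ι, k x (b l) (b m) * k (c l) y (c m)
        = ∑ l : ι, ∑ m : ι, k x (b l) (b m) * k (c l) y (c m) := Finset.sum_comm
      _ = ∑ l : ι, ∑ m : ι, k x (b l) (c m) * k (c l) y (b m) :=
          Finset.sum_congr rfl fun l _ => f33 x (b l) (c l) y
      _ = ∑ m : ι, ∑ l : ι, k x (b l) (c m) * k (c l) y (b m) := Finset.sum_comm
      _ = ∑ m : ι, ∑ l : ι, k x (c l) (c m) * k (b l) y (b m) :=
          Finset.sum_congr rfl fun m _ => f21 x (c m) y (b m)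
      _ = ∑ m : ι, ∑ l : ι, -(k (b l) (b m) y * k x (c l) (c m)) := by
          refine Finset.sum_congr rfl fun m _ => Finset.sum_congr rfl fun l _ => ?_
          rw [hskew (b l) y (b m)]; ring
      _ = -∑ m : ι, ∑ l : ι, k (b l) (b m) y * k x (c l) (c m) := by
          simp only [Finset.sum_neg_distrib]
  have hP3 : ∑ m : ι, ∑ l : ι, k (b l) (b m) x * k (c l) y (c m)
      = -∑ m : ι, ∑ l : ι, k (b l) (b m) y * k (c l) (c m) x := by
    calc ∑ m : ι, ∑ l : ι, k (b l) (b m) x * k (c l) y (c m)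
        = ∑ m : ι, ∑ l : ι, k (c l) (b m) x * k (b l) y (c m) :=
          Finset.sum_congr rfl fun m _ => f11 (b m) x y (c m)
      _ = ∑ l : ι, ∑ m : ι, k (c l) (b m) x * k (b l) y (c m) := Finset.sum_comm
      _ = ∑ l : ι, ∑ m : ι, k (c l) (c m) x * k (b l) y (b m) :=
          Finset.sum_congr rfl fun l _ => f23 (c l) x (b l) y
      _ = ∑ m : ι, ∑ l : ι, k (c l) (c m) x * k (b l) y (b m) := Finset.sum_comm
      _ = ∑ m : ι, ∑ l : ι, -(k (b l) (b m) y * k (c l) (c m) x) := by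
          refine Finset.sum_congr rfl fun m _ => Finset.sum_congr rfl fun l _ => ?_
          rw [hskew (b l) y (b m)]; ring
      _ = -∑ m : ι, ∑ l : ι, k (b l) (b m) y * k (c l) (c m) x := by
          simp only [Finset.sum_neg_distrib]
  have hQ1 : ∑ m : ι, ∑ l : ι, k (b m) y (b l) * k (c l) x (c m)
      = ∑ m : ι, ∑ l : ι, k (b l) (b m) y * k (c m) (c l) x := by
    calc ∑ m : ι, ∑ l : ι, k (b m) y (b l) * k (c l) x (c m)
        = ∑ m : ι, ∑ l : ι, k (b l) y (b m) * k (c m) x (c l) := Finset.sum_comm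
      _ = ∑ m : ι, ∑ l : ι, k (b l) (b m) y * k (c m) (c l) x := by
          refine Finset.sum_congr rfl fun m _ => Finset.sum_congr rfl fun l _ => ?_
          rw [hskew (b l) y (b m), hskew (c m) x (c l)]; ring
  have hQ2 : ∑ m : ι, ∑ l : ι, k y (b l) (b m) * k (c l) x (c m)
      = -∑ m : ι, ∑ l : ι, k y (b l) (b m) * k (c l) (c m) x := by
    calc ∑ m : ι, ∑ l : ι, k y (b l) (b m) * k (c l) x (c m)
        = ∑ m : ι, ∑ l : ι, -(k y (b l) (b m) * k (c l) (c m) x) := by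
          refine Finset.sum_congr rfl fun m _ => Finset.sum_congr rfl fun l _ => ?_
          rw [hskew (c l) x (c m)]; ring
      _ = -∑ m : ι, ∑ l : ι, k y (b l) (b m) * k (c l) (c m) x := by
          simp only [Finset.sum_neg_distrib]
  -- the right-hand side
  have hR : (∑ l : ι, ∑ m : ι, k (b l) (b m) y * (k (c l) (c m) x - 2 * k (c m) (c l) x))
      = (∑ m : ι, ∑ l : ι, k (b l) (b m) y * k (c l) (c m) x)
        - 2 * (∑ m : ι, ∑ l : ι, k (b l) (b m) y * k (c m) (c l) x) := by
    rw [Finset.sum_comm]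
    calc ∑ m : ι, ∑ l : ι, k (b l) (b m) y * (k (c l) (c m) x - 2 * k (c m) (c l) x)
        = ∑ m : ι, ∑ l : ι, (k (b l) (b m) y * k (c l) (c m) x
            + -(k (b l) (b m) y * k (c m) (c l) x)
            + -(k (b l) (b m) y * k (c m) (c l) x)) := by
          refine Finset.sum_congr rfl fun m _ => Finset.sum_congr rfl fun l _ => ?_
          ring
      _ = _ := by
          simp only [Finset.sum_add_distrib, Finset.sum_neg_distrib]
          ring
  -- assembly
  congr 1
  calc ∑ m : ι,
        (k (sharp ((k.flip (b m)).flip y)) x (c m)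
          - k y (sharp (k (b m) x)) (c m)
          - k (c m) (sharp (k x (b m))) y
          + k ⁅b m, x⁆ y (c m)
          + k ⁅b m, y⁆ x (c m))
      = ∑ m : ι, ∑ l : ι,
          (k (b l) (b m) y * k (c l) x (c m)
            - k (b m) x (b l) * k y (c l) (c m)
            - k x (b m) (b l) * k (c m) (c l) y
            + (-(k (b m) x (b l) + k x (b l) (b m) + k (b l) (b m) x)) * k (c l) y (c m)
            + (-(k (b m) y (b l) + k y (b l) (b m) + k (b l) (b m) y)) * k (c l) x (c m)) := by
        refine Finset.sum_congr rfl fun m _ => ?_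
        rw [he1 m, he2 m, he3 m, he4 (b m) x y (c m), he4 (b m) y x (c m),
          ← Finset.sum_sub_distrib, ← Finset.sum_sub_distrib,
          ← Finset.sum_add_distrib, ← Finset.sum_add_distrib]
    _ = ∑ m : ι, ∑ l : ι,
          (k (b l) (b m) y * k (c l) x (c m)
            + -(k (b m) x (b l) * k y (c l) (c m))
            + -(k x (b m) (b l) * k (c m) (c l) y)
            + -(k (b m) x (b l) * k (c l) y (c m))
            + -(k x (b l) (b m) * k (c l) y (c m))
            + -(k (b l) (b m) x * k (c l) y (c m))
            + -(k (b m) y (b l) * k (c l) x (c m))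
            + -(k y (b l) (b m) * k (c l) x (c m))
            + -(k (b l) (b m) y * k (c l) x (c m))) := by
        refine Finset.sum_congr rfl fun m _ => Finset.sum_congr rfl fun l _ => ?_
        ring
    _ = (∑ m : ι, ∑ l : ι, k (b l) (b m) y * k (c l) x (c m))
          + -(∑ m : ι, ∑ l : ι, k (b m) x (b l) * k y (c l) (c m))
          + -(∑ m : ι, ∑ l : ι, k x (b m) (b l) * k (c m) (c l) y)
          + -(∑ m : ι, ∑ l : ι, k (b m) x (b l) * k (c l) y (c m))
          + -(∑ m : ι, ∑ l : ι, k x (b l) (b m) * k (c l) y (c m))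
          + -(∑ m : ι, ∑ l : ι, k (b l) (b m) x * k (c l) y (c m))
          + -(∑ m : ι, ∑ l : ι, k (b m) y (b l) * k (c l) x (c m))
          + -(∑ m : ι, ∑ l : ι, k y (b l) (b m) * k (c l) x (c m))
          + -(∑ m : ι, ∑ l : ι, k (b l) (b m) y * k (c l) x (c m)) := by
        simp only [Finset.sum_add_distrib, Finset.sum_neg_distrib]
    _ = ∑ l : ι, ∑ m : ι,
          k (b l) (b m) y * (k (c l) (c m) x - 2 * k (c m) (c l) x) := by
        rw [hT1, hT2, hT3, hP1, hP2, hP3, hQ1, hQ2, hR]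
        ring
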